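/- (Noisy combiner identity in Lemma 2's form.) Let N be a positive integer, s ∈ ℂ^N, p ∈ ℝ^N with p_j ≥ 0 for all j, g ∈ ℂ with g ≠ 0, z ∈ ℂ^N an arbitrary (noise) vector, and let a, d ∈ ℂ^N be unit-modulus vectors. For each m ∈ {0,…,N−1} define x_m(i) = (1/√N) Σ_{j=0}^{N−1} U_j(i,m) √(p_j) s_j and y_m = d_m · g · (Σ_{i=0}^{N−1} a_i x_m(i)) + z_m. Then for every n ∈ {0,…,N−1}, the combined signal c_n = (1/g) Σ_{m=0}^{N−1} (Σ_{i=0}^{N−1} conj(a_i) conj(U_n(i,m))) · conj(d_m) · y_m satisfies c_n = √(N p_n) · s_n + (1/g) Σ_{m=0}^{N−1} (Σ_{i=0}^{N−1} conj(a_i) conj(U_n(i,m))) · conj(d_m) · z_m. -/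

import Mathlib

open Matrix Complex Finset

/-- The normalized `N × N` DFT matrix: `U i j = ω^(i*j) / √N` with `ω = exp(2πi/N)`. -/
noncomputable def dftU (N : ℕ) : Matrix (Fin N) (Fin N) ℂ :=
  fun i j => Complex.exp (2 * Real.pi * Complex.I / (N : ℂ)) ^ (i.val * j.val) / (Real.sqrt N : ℂ)

/-- The `n`-th circulant-permutation DFT (CP-DFT) matrix:
`U_n i j = U i ((j + n) mod N)`, where addition in `Fin N` is modulo `N`. -/
noncomputable def cpdft (N : ℕ) (n : Fin N) : Matrix (Fin N) (Fin N) ℂ :=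
  fun i j => dftU N i (j + n)


noncomputable def ew (N : ℕ) : ℤ → ℂ := fun k => Complex.exp (2 * Real.pi * Complex.I / N) ^ k

lemma ew_ne (N : ℕ) : Complex.exp (2 * Real.pi * Complex.I / (N:ℂ)) ≠ 0 := Complex.exp_ne_zero _

lemma ew_add (N : ℕ) (a b : ℤ) : ew N (a+b) = ew N a * ew N b := zpow_add₀ (ew_ne N) a b

lemma ew_natN (N : ℕ) (hN : 0 < N) : ew N (N : ℤ) = 1 := by
  have hNc : (N:ℂ) ≠ 0 := Nat.cast_ne_zero.mpr hN.ne'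
  unfold ew
  rw [_root_.zpow_natCast, ← Complex.exp_nat_mul]
  rw [show (N:ℂ) * (2 * Real.pi * Complex.I / N) = 2 * Real.pi * Complex.I by field_simp]
  exact Complex.exp_two_pi_mul_I

lemma ew_periodic (N : ℕ) (hN : 0 < N) (a t : ℤ) : ew N (a + N * t) = ew N a := by
  rw [ew_add, show ew N ((N:ℤ)*t) = (ew N N)^t by unfold ew; rw [_root_.zpow_mul], ew_natN N hN]
  simp

lemma ew_congr (N : ℕ) (hN : 0 < N) {a b : ℤ} (h : a % (N:ℤ) = b % N) : ew N a = ew N b := by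
  have : (N:ℤ) ∣ b - a := Int.ModEq.dvd h
  obtain ⟨t, ht⟩ := this
  have : b = a + N * t := by linarith
  rw [this, ew_periodic N hN]

lemma ew_conj (N : ℕ) (a : ℤ) : (starRingEnd ℂ) (ew N a) = ew N (-a) := by
  unfold ew
  rw [map_zpow₀, ← Complex.exp_conj]
  rw [show (2 * Real.pi * Complex.I / N : ℂ) = ((2*Real.pi/N : ℝ) : ℂ) * Complex.I by
    push_cast; ring]
  rw [show (starRingEnd ℂ) (((2*Real.pi/N : ℝ) : ℂ) * Complex.I)
      = -(((2*Real.pi/N : ℝ) : ℂ) * Complex.I) by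
    rw [_root_.map_mul, Complex.conj_ofReal, Complex.conj_I]; ring]
  rw [Complex.exp_neg, _root_.inv_zpow, ← _root_.zpow_neg]

lemma ew_key (N : ℕ) (hN : 0 < N) (k : ℤ) :
    ∑ m : Fin N, ew N (k * m.val) = if (N:ℤ) ∣ k then (N:ℂ) else 0 := by
  by_cases h : (N:ℤ) ∣ k
  · obtain ⟨t, ht⟩ := h
    rw [if_pos ⟨t, ht⟩]
    have h1 : ∀ m : Fin N, ew N (k * m.val) = 1 := by
      intro m
      rw [ht, show (N:ℤ) * t * m.val = 0 + N * (t * m.val) by ring, ew_periodic N hN]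
      unfold ew; simp
    simp [h1]
  · rw [if_neg h]
    have hz : ew N k ≠ 1 := by
      intro hz
      exact h ((Complex.isPrimitiveRoot_exp N hN.ne').zpow_eq_one_iff_dvd k |>.mp hz)
    have hsum : ∑ m : Fin N, ew N (k * m.val) = ∑ m ∈ Finset.range N, (ew N k)^m := by
      rw [Fin.sum_univ_eq_sum_range (fun m : ℕ => ew N (k * (m:ℤ)))]
      refine Finset.sum_congr rfl fun m _ => ?_
      unfold ew
      rw [← _root_.zpow_natCast (Complex.exp _ ^ k) m, ← _root_.zpow_mul]
    rw [hsum, geom_sum_eq hz]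
    have hN1 : (ew N k)^N = 1 := by
      rw [← _root_.zpow_natCast (ew N k) N]
      unfold ew
      rw [← _root_.zpow_mul, show k * (N:ℤ) = (N:ℤ) * k by ring, _root_.zpow_mul]
      change (ew N ((N:ℤ)))^k = 1
      rw [ew_natN N hN, _root_.one_zpow]
    rw [hN1]; simp


lemma cpdft_eq (N : ℕ) (hN : 0 < N) (n i m : Fin N) :
    cpdft N n i m = ew N ((i.val:ℤ) * (m.val + n.val)) / (Real.sqrt N : ℂ) := by
  show dftU N i (m + n) = _
  unfold dftU
  congr 1
  rw [show Complex.exp (2 * Real.pi * Complex.I / (N:ℂ)) ^ (i.val * (m+n).val)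
      = ew N ((i.val : ℤ) * ((m+n).val : ℤ)) by unfold ew; rw [← _root_.zpow_natCast]; norm_cast]
  apply ew_congr N hN
  have hv : (((m+n : Fin N).val : ℤ)) = ((m.val : ℤ) + n.val) % N := by
    rw [Fin.add_def]
    push_cast [Int.natCast_mod]
    ring_nf
  rw [hv]
  have : ((m.val:ℤ) + n.val) % N ≡ (m.val:ℤ) + n.val [ZMOD N] := Int.emod_emod_of_dvd _ dvd_rfl
  exact (this.mul_left (i.val:ℤ))

lemma conj_cpdft (N : ℕ) (hN : 0 < N) (n i m : Fin N) :
    (starRingEnd ℂ) (cpdft N n i m)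
      = ew N (-((i.val:ℤ) * (m.val + n.val))) / (Real.sqrt N : ℂ) := by
  rw [cpdft_eq N hN, _root_.map_div₀, ew_conj, Complex.conj_ofReal]

lemma fin_dvd_iff (N : ℕ) (i i' : Fin N) : ((N:ℤ) ∣ ((i'.val:ℤ) - i.val)) ↔ i' = i := by
  constructor
  · rintro ⟨t, ht⟩
    have h1 : (i'.val : ℤ) < N := by exact_mod_cast i'.isLt
    have h2 : (i.val : ℤ) < N := by exact_mod_cast i.isLt
    have h3 : (0:ℤ) ≤ i'.val := Int.natCast_nonneg _
    have h4 : (0:ℤ) ≤ i.val := Int.natCast_nonneg _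
    have hN : (0:ℤ) < N := lt_of_le_of_lt h4 h2
    have ht0 : t = 0 := by nlinarith
    rw [ht0, mul_zero] at ht
    have : (i'.val : ℤ) = i.val := by linarith
    exact Fin.ext (by exact_mod_cast this)
  · rintro rfl; simp

lemma main_sum (N : ℕ) (hN : 0 < N) (n : Fin N) (a W : Fin N → ℂ)
    (ha : ∀ i, ‖a i‖ = 1) :
    ∑ m : Fin N, (∑ i, (starRingEnd ℂ) (a i) * (starRingEnd ℂ) (cpdft N n i m)) *
      (∑ i, a i * ((1 / (Real.sqrt N : ℂ)) * ∑ j, cpdft N j i m * W j))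
      = (Real.sqrt N : ℂ) * W n := by
  have hr : (Real.sqrt N : ℂ) * (Real.sqrt N : ℂ) = N := by
    rw [← Complex.ofReal_mul, Real.mul_self_sqrt (Nat.cast_nonneg N)]
    norm_cast
  have hrne : (Real.sqrt N : ℂ) ≠ 0 := by
    simp only [ne_eq, Complex.ofReal_eq_zero]
    positivity
  have haa : ∀ i, (starRingEnd ℂ) (a i) * a i = 1 := by
    intro i
    rw [mul_comm, Complex.mul_conj]
    norm_cast
    rw [Complex.normSq_eq_norm_sq, ha]
    norm_num
  have step1 : ∀ m : Fin N,
      (∑ i, (starRingEnd ℂ) (a i) * (starRingEnd ℂ) (cpdft N n i m)) *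
        (∑ i, a i * ((1 / (Real.sqrt N:ℂ)) * ∑ j, cpdft N j i m * W j))
      = ∑ i, ∑ i', ∑ j, ((starRingEnd ℂ) (a i) * a i' * W j / ((Real.sqrt N:ℂ)*(Real.sqrt N:ℂ)*(Real.sqrt N:ℂ))
          * ew N (((i'.val:ℤ)*j.val - i.val*n.val)))
          * ew N ((((i'.val:ℤ)) - i.val) * m.val) := by
    intro m
    rw [Finset.sum_mul_sum]
    refine Finset.sum_congr rfl fun i _ => ?_
    refine Finset.sum_congr rfl fun i' _ => ?_
    simp only [cpdft_eq N hN, _root_.map_div₀, ew_conj, Complex.conj_ofReal, Finset.mul_sum]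
    refine Finset.sum_congr rfl fun j _ => ?_
    rw [show ((((i'.val:ℤ)) - i.val) * m.val) = (-((i.val:ℤ) * (m.val + n.val)))
        + ((i'.val:ℤ) * (m.val + j.val)) + (-(((i'.val:ℤ)*j.val - i.val*n.val))) by ring]
    rw [ew_add, ew_add]
    rw [show ew N (-(((i'.val:ℤ)*j.val - i.val*n.val)))
        = (ew N (((i'.val:ℤ)*j.val - i.val*n.val)))⁻¹ by
      unfold ew; exact (_root_.zpow_neg _ _)]
    have hewne : ew N (((i'.val:ℤ)*j.val - i.val*n.val)) ≠ 0 := by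
      unfold ew
      exact zpow_ne_zero _ (Complex.exp_ne_zero _)
    field_simp
  rw [Finset.sum_congr rfl fun m _ => step1 m]
  rw [Finset.sum_comm]
  have step2 : ∀ i : Fin N,
      (∑ m : Fin N, ∑ i', ∑ j, ((starRingEnd ℂ) (a i) * a i' * W j / ((Real.sqrt N:ℂ)*(Real.sqrt N:ℂ)*(Real.sqrt N:ℂ))
          * ew N (((i'.val:ℤ)*j.val - i.val*n.val)))
          * ew N ((((i'.val:ℤ)) - i.val) * m.val))
      = ∑ j, ((starRingEnd ℂ) (a i) * a i * W j / ((Real.sqrt N:ℂ)*(Real.sqrt N:ℂ)*(Real.sqrt N:ℂ))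
          * ew N (((i.val:ℤ)*j.val - i.val*n.val))) * N := by
    intro i
    rw [Finset.sum_comm]
    have inner : ∀ i' : Fin N,
        (∑ m : Fin N, ∑ j, ((starRingEnd ℂ) (a i) * a i' * W j / ((Real.sqrt N:ℂ)*(Real.sqrt N:ℂ)*(Real.sqrt N:ℂ))
          * ew N (((i'.val:ℤ)*j.val - i.val*n.val)))
          * ew N ((((i'.val:ℤ)) - i.val) * m.val))
        = if i' = i then ∑ j, ((starRingEnd ℂ) (a i) * a i' * W j / ((Real.sqrt N:ℂ)*(Real.sqrt N:ℂ)*(Real.sqrt N:ℂ))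
          * ew N (((i'.val:ℤ)*j.val - i.val*n.val))) * N else 0 := by
      intro i'
      rw [Finset.sum_comm]
      rw [Finset.sum_congr rfl fun j _ => (Finset.mul_sum _ _ _).symm]
      rw [Finset.sum_congr rfl fun j _ => by rw [ew_key N hN]]
      simp only [fin_dvd_iff N i i', mul_ite, mul_zero]
      split
      · rfl
      · simp
    rw [Finset.sum_congr rfl fun i' _ => inner i']
    rw [Finset.sum_ite_eq' Finset.univ i _]
    simp
  rw [Finset.sum_congr rfl fun i _ => step2 i]
  simp only [haa, one_mul]
  rw [Finset.sum_comm]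
  have step3 : ∀ j : Fin N,
      (∑ i : Fin N, (W j / ((Real.sqrt N:ℂ)*(Real.sqrt N:ℂ)*(Real.sqrt N:ℂ)) * ew N (((i.val:ℤ)*j.val - i.val*n.val))) * N)
      = if j = n then W j / ((Real.sqrt N:ℂ)*(Real.sqrt N:ℂ)*(Real.sqrt N:ℂ)) * N * N else 0 := by
    intro j
    have harg : ∀ i : Fin N, ((i.val:ℤ)*j.val - i.val*n.val) = ((j.val:ℤ) - n.val) * i.val := by
      intro i; ring
    rw [Finset.sum_congr rfl fun i _ => by rw [harg i]]
    rw [show (∑ i : Fin N, (W j / ((Real.sqrt N:ℂ)*(Real.sqrt N:ℂ)*(Real.sqrt N:ℂ)) * ew N (((j.val:ℤ) - n.val) * i.val)) * N)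
        = (W j / ((Real.sqrt N:ℂ)*(Real.sqrt N:ℂ)*(Real.sqrt N:ℂ)) * N) * ∑ i : Fin N, ew N (((j.val:ℤ) - n.val) * i.val) by
      rw [Finset.mul_sum]; exact Finset.sum_congr rfl fun i _ => by ring]
    rw [ew_key N hN]
    simp only [fin_dvd_iff N n j, mul_ite, mul_zero]
  rw [Finset.sum_congr rfl fun j _ => step3 j]
  rw [Finset.sum_ite_eq' Finset.univ n _]
  simp only [Finset.mem_univ, if_true]
  rw [← hr]
  field_simp


/-- noisy combiner identity in Lemma 2's form: with precoding as before and
noisy received samples `y m = d m · g · (∑ i, a i · x m i) + z m`, the combined signal satisfies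
`c n = √(N p_n) · s n + (1/g) ∑ m (∑ i, conj (a i) conj (U_n(i,m))) conj (d m) z m`. -/
theorem noisy_combiner_identity (N : ℕ) (hN : 0 < N)
    (s : Fin N → ℂ) (p : Fin N → ℝ) (hp : ∀ j, 0 ≤ p j)
    (g : ℂ) (hg : g ≠ 0) (z : Fin N → ℂ)
    (a d : Fin N → ℂ) (ha : ∀ i, ‖a i‖ = 1) (hd : ∀ m, ‖d m‖ = 1)
    (x : Fin N → Fin N → ℂ)
    (hx : ∀ m i, x m i =
      (1 / (Real.sqrt N : ℂ)) * ∑ j, cpdft N j i m * (Real.sqrt (p j) : ℂ) * s j)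
    (y : Fin N → ℂ)
    (hy : ∀ m, y m = d m * g * (∑ i, a i * x m i) + z m)
    (c : Fin N → ℂ)
    (hc : ∀ n, c n = (1 / g) * ∑ m,
      (∑ i, (starRingEnd ℂ) (a i) * (starRingEnd ℂ) (cpdft N n i m)) *
        (starRingEnd ℂ) (d m) * y m) :
    ∀ n, c n = (Real.sqrt ((N : ℝ) * p n) : ℂ) * s n +
      (1 / g) * ∑ m,
        (∑ i, (starRingEnd ℂ) (a i) * (starRingEnd ℂ) (cpdft N n i m)) *
          (starRingEnd ℂ) (d m) * z m := by
  intro n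
  have hdd : ∀ m, (starRingEnd ℂ) (d m) * d m = 1 := by
    intro m
    rw [mul_comm, Complex.mul_conj]
    norm_cast
    rw [Complex.normSq_eq_norm_sq, hd]
    norm_num
  have key : ∀ m, (∑ i, (starRingEnd ℂ) (a i) * (starRingEnd ℂ) (cpdft N n i m)) *
        (starRingEnd ℂ) (d m) * y m
      = g * ((∑ i, (starRingEnd ℂ) (a i) * (starRingEnd ℂ) (cpdft N n i m)) *
          (∑ i, a i * ((1 / (Real.sqrt N : ℂ)) *
            ∑ j, cpdft N j i m * ((Real.sqrt (p j):ℂ) * s j))))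
        + (∑ i, (starRingEnd ℂ) (a i) * (starRingEnd ℂ) (cpdft N n i m)) *
          (starRingEnd ℂ) (d m) * z m := by
    intro m
    rw [hy m]
    have hX : (∑ i, a i * x m i) = ∑ i, a i * ((1 / (Real.sqrt N : ℂ)) *
        ∑ j, cpdft N j i m * ((Real.sqrt (p j):ℂ) * s j)) := by
      refine Finset.sum_congr rfl fun i _ => ?_
      rw [hx m i]
      congr 2
      exact Finset.sum_congr rfl fun j _ => mul_assoc _ _ _
    rw [hX]
    calc (∑ i, (starRingEnd ℂ) (a i) * (starRingEnd ℂ) (cpdft N n i m)) *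
          (starRingEnd ℂ) (d m) *
          (d m * g * (∑ i, a i * ((1 / (Real.sqrt N : ℂ)) *
            ∑ j, cpdft N j i m * ((Real.sqrt (p j):ℂ) * s j))) + z m)
        = g * ((∑ i, (starRingEnd ℂ) (a i) * (starRingEnd ℂ) (cpdft N n i m)) *
            (∑ i, a i * ((1 / (Real.sqrt N : ℂ)) *
              ∑ j, cpdft N j i m * ((Real.sqrt (p j):ℂ) * s j)))) *
            ((starRingEnd ℂ) (d m) * d m)
          + (∑ i, (starRingEnd ℂ) (a i) * (starRingEnd ℂ) (cpdft N n i m)) *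
            (starRingEnd ℂ) (d m) * z m := by ring
      _ = _ := by rw [hdd m]; ring
  rw [hc n, Finset.sum_congr rfl fun m _ => key m, Finset.sum_add_distrib, mul_add,
    ← Finset.mul_sum, main_sum N hN n a (fun j => (Real.sqrt (p j):ℂ) * s j) ha]
  congr 1
  rw [show (Real.sqrt ((N:ℝ) * p n) : ℂ) = (Real.sqrt N : ℂ) * (Real.sqrt (p n)) by
    rw [Real.sqrt_mul (Nat.cast_nonneg N), Complex.ofReal_mul]]
  field_simp
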